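/- Let D be a (v,k,λ)-difference set in a finite abelian group G with k > λ. Then there exists g ∈ G such that the equation d₁·d₂ = g⁻² has strictly more than λ solutions (d₁,d₂) ∈ D × D. -/

import Mathlib

def IsDiffSet {G : Type*} [Group G] [Fintype G] [DecidableEq G]
    (v k l : ℕ) (D : Finset G) : Prop :=
  Fintype.card G = v ∧ D.card = k ∧
    ∀ g : G, g ≠ 1 → ((D ×ˢ D).filter (fun p => p.1 * p.2⁻¹ = g)).card = l

/-- For an abelian difference set `D` with `k > λ`, there is a `g ∈ G` such that
`d₁·d₂ = g⁻²` has strictly more than `λ` solutions `(d₁, d₂) ∈ D × D`. -/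
theorem stmt8 {G : Type*} [CommGroup G] [Fintype G] [DecidableEq G]
    (v k l : ℕ) (D : Finset G) (hD : IsDiffSet v k l D) (hkl : l < k) :
    ∃ g : G, l < ((D ×ˢ D).filter (fun p => p.1 * p.2 = g⁻¹ * g⁻¹)).card := by
  classical
  by_contra hcon
  push_neg at hcon
  obtain ⟨hv, hk, hl⟩ := hD
  -- Step 1: k*k = (v-1)*l + k
  have hvpos : 0 < v := hv ▸ Fintype.card_pos
  have hcount : k * k = (v - 1) * l + k := by
    have h1 : (D ×ˢ D).card =
        ∑ g ∈ (Finset.univ : Finset G),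
          ((D ×ˢ D).filter (fun p => p.1 * p.2⁻¹ = g)).card :=
      Finset.card_eq_sum_card_fiberwise (fun p _ => Finset.mem_univ _)
    have hdiag : ((D ×ˢ D).filter (fun p => p.1 * p.2⁻¹ = (1 : G))).card = k := by
      have heq : (D ×ˢ D).filter (fun p => p.1 * p.2⁻¹ = (1 : G)) = D.diag := by
        ext p
        simp only [Finset.mem_filter, Finset.mem_product, Finset.mem_diag, mul_inv_eq_one]
        constructor
        · rintro ⟨⟨h1, h2⟩, h3⟩; exact ⟨h1, h3⟩
        · rintro ⟨h1, h3⟩; exact ⟨⟨h1, h3 ▸ h1⟩, h3⟩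
      rw [heq, Finset.diag_card, hk]
    have h2 : ∑ g ∈ (Finset.univ : Finset G),
          ((D ×ˢ D).filter (fun p => p.1 * p.2⁻¹ = g)).card
        = ∑ g ∈ (Finset.univ.erase (1 : G)),
          ((D ×ˢ D).filter (fun p => p.1 * p.2⁻¹ = g)).card + k := by
      rw [← Finset.sum_erase_add _ _ (Finset.mem_univ (1 : G)), hdiag]
    have h3 : ∑ g ∈ (Finset.univ.erase (1 : G)),
          ((D ×ˢ D).filter (fun p => p.1 * p.2⁻¹ = g)).card = (v - 1) * l := by
      rw [Finset.sum_congr rfl (fun g hg => hl g (Finset.ne_of_mem_erase hg)),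
        Finset.sum_const, smul_eq_mul, Finset.card_erase_of_mem (Finset.mem_univ _),
        Finset.card_univ, hv]
    have h4 : (D ×ˢ D).card = (v - 1) * l + k := by rw [h1, h2, h3]
    rwa [Finset.card_product, hk] at h4
  have hlv : l * v < k * k := by
    obtain ⟨w, rfl⟩ : ∃ w, v = w + 1 := ⟨v - 1, by omega⟩
    have e1 : l * (w + 1) = w * l + l := by ring
    have e2 : (w + 1) - 1 = w := by omega
    rw [e1, hcount, e2]
    exact Nat.add_lt_add_left hkl _
  -- the subgroup of squares
  set H : Subgroup G := (powMonoidHom 2 : G →* G).range with hH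
  set T : Finset G := Finset.univ.image (fun h : G => h ^ 2) with hT
  have hTmem : ∀ x : G, x ∈ T ↔ x ∈ H := by
    intro x
    simp [hT, hH, powMonoidHom_apply, eq_comm]
  -- pairs whose product is a square
  set S : Finset (G × G) := (D ×ˢ D).filter (fun p => p.1 * p.2 ∈ H) with hS
  -- upper bound: S.card ≤ l * T.card
  have hupper : S.card ≤ l * T.card := by
    have h1 : S.card = ∑ s ∈ T, (S.filter (fun p => p.1 * p.2 = s)).card := by
      apply Finset.card_eq_sum_card_fiberwise
      intro p hp
      rw [hS, Finset.mem_coe, Finset.mem_filter] at hp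
      exact Finset.mem_coe.2 ((hTmem _).2 hp.2)
    rw [h1]
    calc ∑ s ∈ T, (S.filter (fun p => p.1 * p.2 = s)).card
        ≤ ∑ _s ∈ T, l := by
          apply Finset.sum_le_sum
          intro s hs
          obtain ⟨h, -, hh⟩ := Finset.mem_image.1 hs
          have key := hcon h⁻¹
          have hss : h⁻¹⁻¹ * h⁻¹⁻¹ = s := by rw [inv_inv, ← sq, hh]
          calc (S.filter (fun p => p.1 * p.2 = s)).card
              ≤ ((D ×ˢ D).filter (fun p => p.1 * p.2 = s)).card := by
                apply Finset.card_le_card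
                intro p hp
                simp only [hS, Finset.mem_filter, Finset.filter_filter] at hp ⊢
                exact ⟨hp.1, hp.2.2⟩
          _ ≤ l := by rw [← hss]; exact key
    _ = l * T.card := by rw [Finset.sum_const, smul_eq_mul, mul_comm]
  -- quotient setup
  set Q := G ⧸ H with hQ
  set π : G → Q := (QuotientGroup.mk : G → G ⧸ H) with hpi
  have hq2 : ∀ a : Q, a * a = 1 := by
    intro a
    induction a using QuotientGroup.induction_on with
    | H x =>
      rw [← QuotientGroup.mk_mul, QuotientGroup.eq_one_iff]
      exact ⟨x, by simp [powMonoidHom_apply, sq]⟩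
  set n : Q → ℕ := fun q => (D.filter (fun d => π d = q)).card with hn
  have hksum : k = ∑ q ∈ (Finset.univ : Finset Q), n q := by
    rw [← hk]
    exact Finset.card_eq_sum_card_fiberwise (fun d _ => Finset.mem_univ _)
  have hSsum : S.card = ∑ q ∈ (Finset.univ : Finset Q), n q ^ 2 := by
    have h1 : S.card = ∑ q ∈ (Finset.univ : Finset Q),
        (S.filter (fun p => (π p.1 = q))).card :=
      Finset.card_eq_sum_card_fiberwise (fun p _ => Finset.mem_univ _)
    rw [h1]
    apply Finset.sum_congr rfl
    intro q _
    have heq : S.filter (fun p => (π p.1 = q))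
        = (D.filter (fun d => π d = q)) ×ˢ (D.filter (fun d => π d = q)) := by
      ext p
      simp only [hS, Finset.mem_filter, Finset.mem_product, Finset.filter_filter]
      constructor
      · rintro ⟨⟨h1, h2⟩, h3, h4⟩
        have h3' : π p.1 * π p.2 = 1 := by
          rw [hpi, ← QuotientGroup.mk_mul, QuotientGroup.eq_one_iff]; exact h3
        rw [h4] at h3'
        have h5 : π p.2 = q := by
          calc π p.2 = (q * q) * π p.2 := by rw [hq2 q, one_mul]
          _ = q * (q * π p.2) := mul_assoc _ _ _
          _ = q * 1 := by rw [← h3']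
          _ = q := mul_one q
        exact ⟨⟨h1, h4⟩, h2, h5⟩
      · rintro ⟨⟨h1, h4⟩, h2, h5⟩
        refine ⟨⟨h1, h2⟩, ?_, h4⟩
        have : π (p.1 * p.2) = 1 := by
          rw [hpi, QuotientGroup.mk_mul]
          show π p.1 * π p.2 = 1
          rw [h4, h5]; exact hq2 q
        rwa [hpi, QuotientGroup.eq_one_iff] at this
    rw [heq, Finset.card_product]
    simp only [hn]
    rw [sq]
  -- Cauchy-Schwarz
  have hCS : k ^ 2 ≤ Fintype.card Q * S.card := by
    rw [hksum, hSsum]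
    simpa using sq_sum_le_card_mul_sum_sq (s := (Finset.univ : Finset Q)) (f := n)
  -- card relation: Fintype.card Q * T.card = v
  have hcardrel : Fintype.card Q * T.card = v := by
    have h1 := Subgroup.card_eq_card_quotient_mul_card_subgroup H
    have h2 : Nat.card H = T.card := by
      have hset : (H : Set G) = (T : Set G) := by
        ext x
        simp only [Finset.mem_coe, SetLike.mem_coe, ← hTmem x]
      rw [show (Nat.card H : ℕ) = Nat.card (H : Set G) from rfl, hset,
        Nat.card_coe_set_eq, Set.ncard_coe_finset]
    rw [h2, Nat.card_eq_fintype_card, Nat.card_eq_fintype_card, hv] at h1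
    exact h1.symm
  -- combine
  have hfin : k * k ≤ l * v := by
    calc k * k = k ^ 2 := (sq k).symm
    _ ≤ Fintype.card Q * S.card := hCS
    _ ≤ Fintype.card Q * (l * T.card) := Nat.mul_le_mul_left _ hupper
    _ = l * (Fintype.card Q * T.card) := by ring
    _ = l * v := by rw [hcardrel]
  omega
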